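/- For all real numbers 0 ≤ s ≤ t, the function (t,s) ↦ √(t+s) − √(t−s) satisfies: for any n, any t₁,...,tₙ ≥ 0 and reals λ₁,...,λₙ, ∑_{i,j} λᵢλⱼ (√(tᵢ+tⱼ) − √|tᵢ−tⱼ|) ≥ 0; i.e., (t,s) ↦ √(t+s) − √|t−s| is a positive semidefinite kernel on [0,∞). -/

import Mathlib

open MeasureTheory Set Real

/-- The elementary kernel: a shifted decaying exponential. -/
noncomputable def gg (t r v : ℝ) : ℝ := if r < t then Real.exp (-((t - r) * v ^ 2)) else 0

/-- The inner integral over the "space/frequency" variable. -/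
noncomputable def inn (t s r : ℝ) : ℝ := ∫ v in Set.Ioi (0 : ℝ), gg t r v * gg s r v

lemma gg_mul (t s r v : ℝ) :
    gg t r v * gg s r v =
      if r < min t s then Real.exp (-((t + s - 2 * r) * v ^ 2)) else 0 := by
  unfold gg
  by_cases h1 : r < t <;> by_cases h2 : r < s <;>
    simp [h1, h2, lt_min_iff, ← Real.exp_add] <;> ring_nf

lemma inn_comm (t s : ℝ) : inn t s = inn s t := by
  funext r
  unfold inn
  congr 1
  funext v
  ring

lemma inn_eq (t s r : ℝ) :
    inn t s r = if r < min t s then Real.sqrt (π / (t + s - 2 * r)) / 2 else 0 := by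
  unfold inn
  simp only [gg_mul]
  by_cases h : r < min t s
  · simp only [h, if_true]
    have : ∀ v : ℝ, Real.exp (-((t + s - 2 * r) * v ^ 2))
        = Real.exp (-(t + s - 2 * r) * v ^ 2) := by intro v; ring_nf
    simp_rw [this]
    exact integral_gaussian_Ioi _
  · simp [h]

lemma gg_mul_integrable (t s r : ℝ) :
    IntegrableOn (fun v => gg t r v * gg s r v) (Set.Ioi (0 : ℝ)) := by
  by_cases h : r < min t s
  · have hc : 0 < t + s - 2 * r := by
      rw [lt_min_iff] at h; linarith [h.1, h.2]
    simp only [gg_mul, h, if_true]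
    have := (integrable_exp_neg_mul_sq hc).integrableOn (s := Set.Ioi (0 : ℝ))
    refine this.congr_fun (fun v _ => by ring_nf) measurableSet_Ioi
  · simp only [gg_mul, h, if_false]
    exact integrableOn_zero

lemma rpow_integrable (t s : ℝ) (hs : 0 ≤ s) (hst : s ≤ t) :
    IntegrableOn (fun r : ℝ => (t + s - 2 * r) ^ (-(1 / 2) : ℝ)) (Set.Ioo 0 s) := by
  have h1 : IntervalIntegrable (fun x : ℝ => x ^ (-(1 / 2) : ℝ)) volume (t - s) (t + s) :=
    intervalIntegral.intervalIntegrable_rpow' (by norm_num)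
  have h2 := (h1.comp_sub_left (t + s)).comp_mul_left (c := 2)
  have hb1 : (t + s - (t - s)) / 2 = s := by ring
  have hb2 : (t + s - (t + s)) / 2 = 0 := by ring
  rw [hb1, hb2] at h2
  have h3 : IntervalIntegrable (fun r : ℝ => (t + s - 2 * r) ^ (-(1 / 2) : ℝ)) volume 0 s := by
    refine h2.symm.congr ?_
    intro x _
    ring_nf
  exact h3.1.mono_set Set.Ioo_subset_Ioc_self

lemma inn_indicator (t s : ℝ) (hst : s ≤ t) :
    ∀ r ∈ Set.Ioi (0 : ℝ),
      inn t s r = (Set.Ioo 0 s).indicator (fun r => Real.sqrt (π / (t + s - 2 * r)) / 2) r := by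
  intro r hr
  rw [inn_eq]
  have hmin : min t s = s := min_eq_right hst
  rw [hmin]
  by_cases h : r < s
  · rw [if_pos h, Set.indicator_of_mem (Set.mem_Ioo.mpr ⟨hr, h⟩)]
  · rw [if_neg h, Set.indicator_of_notMem (by simp [Set.mem_Ioo]; intro _; linarith)]

lemma sqrt_pi_div (x : ℝ) (h : 0 < x) :
    Real.sqrt (π / x) / 2 = Real.sqrt π / 2 * x ^ (-(1 / 2) : ℝ) := by
  rw [Real.sqrt_div Real.pi_pos.le, Real.rpow_neg h.le, ← Real.sqrt_eq_rpow]
  ring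

lemma key (t s : ℝ) (hs : 0 ≤ s) (hst : s ≤ t) :
    ∫ r in Set.Ioi (0 : ℝ), inn t s r
      = Real.sqrt π / 2 * (Real.sqrt (t + s) - Real.sqrt (t - s)) := by
  rw [setIntegral_congr_fun measurableSet_Ioi (inn_indicator t s hst),
    setIntegral_indicator measurableSet_Ioo,
    Set.inter_eq_self_of_subset_right Set.Ioo_subset_Ioi_self]
  have hcong : ∀ r ∈ Set.Ioo (0 : ℝ) s,
      Real.sqrt (π / (t + s - 2 * r)) / 2
        = Real.sqrt π / 2 * (t + s - 2 * r) ^ (-(1 / 2) : ℝ) := by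
    intro r hr
    exact sqrt_pi_div _ (by have := hr.1; have := hr.2; linarith)
  rw [setIntegral_congr_fun measurableSet_Ioo hcong, integral_const_mul]
  congr 1
  rw [← integral_Ioc_eq_integral_Ioo, ← intervalIntegral.integral_of_le hs]
  have e2 : t + s - 2 * s = t - s := by ring
  have hA : (∫ r in (0:ℝ)..s, (t + s - 2 * r) ^ (-(1 / 2) : ℝ))
      = (2:ℝ)⁻¹ • ∫ x in (2*(0:ℝ))..(2*s), (t + s - x) ^ (-(1 / 2) : ℝ) :=
    intervalIntegral.integral_comp_mul_left (fun x : ℝ => (t + s - x) ^ (-(1 / 2) : ℝ))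
      two_ne_zero
  rw [hA,
    intervalIntegral.integral_comp_sub_left (fun x : ℝ => x ^ (-(1 / 2) : ℝ)) (t + s),
    mul_zero, sub_zero, e2, integral_rpow (Or.inl (by norm_num))]
  have e3 : (-(1 / 2 : ℝ) + 1) = 1 / 2 := by norm_num
  rw [e3, ← Real.sqrt_eq_rpow, ← Real.sqrt_eq_rpow, smul_eq_mul]
  ring


lemma inn_integrableOn (t s : ℝ) (hs : 0 ≤ s) (hst : s ≤ t) :
    IntegrableOn (inn t s) (Set.Ioi (0 : ℝ)) := by
  have base := rpow_integrable t s hs hst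
  have base2 : IntegrableOn (fun r => Real.sqrt (π / (t + s - 2 * r)) / 2) (Set.Ioo 0 s) := by
    have baseC : IntegrableOn (fun r => Real.sqrt π / 2 * (t + s - 2 * r) ^ (-(1 / 2) : ℝ))
        (Set.Ioo (0:ℝ) s) := base.const_mul _
    refine baseC.congr_fun ?_ measurableSet_Ioo
    intro r hr
    exact (sqrt_pi_div _ (by have := hr.1; have := hr.2; linarith)).symm
  have base3 : IntegrableOn
      ((Set.Ioo (0:ℝ) s).indicator fun r => Real.sqrt (π / (t + s - 2 * r)) / 2)
      (Set.Ioi (0 : ℝ)) := by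
    rw [IntegrableOn, integrable_indicator_iff measurableSet_Ioo, IntegrableOn,
      Measure.restrict_restrict measurableSet_Ioo,
      Set.inter_eq_self_of_subset_left Set.Ioo_subset_Ioi_self]
    exact base2
  exact base3.congr_fun (fun r hr => (inn_indicator t s hst r hr).symm) measurableSet_Ioi

theorem stmt10 (n : ℕ) (t : Fin n → ℝ) (ht : ∀ i, 0 ≤ t i) (lam : Fin n → ℝ) :
    0 ≤ ∑ i, ∑ j, lam i * lam j * (Real.sqrt (t i + t j) - Real.sqrt |t i - t j|) := by
  have hπ : (0:ℝ) < Real.sqrt π := Real.sqrt_pos.mpr Real.pi_pos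
  have hker : ∀ i j, Real.sqrt (t i + t j) - Real.sqrt |t i - t j|
      = 2 / Real.sqrt π * ∫ r in Set.Ioi (0:ℝ), inn (t i) (t j) r := by
    intro i j
    rcases le_total (t j) (t i) with h | h
    · rw [key (t i) (t j) (ht j) h, abs_of_nonneg (sub_nonneg.mpr h)]
      field_simp
    · rw [inn_comm, key (t j) (t i) (ht i) h, abs_of_nonpos (sub_nonpos.mpr h), neg_sub,
        add_comm (t i) (t j)]
      field_simp
  have hint : ∀ i j : Fin n,
      IntegrableOn (fun r => lam i * lam j * inn (t i) (t j) r) (Set.Ioi (0:ℝ)) := by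
    intro i j
    rcases le_total (t j) (t i) with h | h
    · exact (inn_integrableOn _ _ (ht j) h).const_mul _
    · rw [inn_comm (t i) (t j)]
      exact (inn_integrableOn _ _ (ht i) h).const_mul _
  have step1 : ∑ i, ∑ j, lam i * lam j * (Real.sqrt (t i + t j) - Real.sqrt |t i - t j|)
      = 2 / Real.sqrt π
        * ∑ i, ∑ j, ∫ r in Set.Ioi (0:ℝ), lam i * lam j * inn (t i) (t j) r := by
    rw [Finset.mul_sum]
    refine Finset.sum_congr rfl fun i _ => ?_
    rw [Finset.mul_sum]
    refine Finset.sum_congr rfl fun j _ => ?_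
    rw [hker i j, integral_const_mul]
    ring
  rw [step1]
  refine mul_nonneg (by positivity) ?_
  have step2 : ∑ i, ∑ j, (∫ r in Set.Ioi (0:ℝ), lam i * lam j * inn (t i) (t j) r)
      = ∫ r in Set.Ioi (0:ℝ), ∑ i, ∑ j, lam i * lam j * inn (t i) (t j) r := by
    rw [integral_finset_sum _ (fun i _ => integrable_finset_sum _ (fun j _ => hint i j))]
    exact Finset.sum_congr rfl fun i _ => (integral_finset_sum _ (fun j _ => hint i j)).symm
  rw [step2]
  refine setIntegral_nonneg measurableSet_Ioi fun r _ => ?_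
  have hGint : ∀ i j : Fin n, IntegrableOn
      (fun v => (lam i * gg (t i) r v) * (lam j * gg (t j) r v)) (Set.Ioi (0:ℝ)) := by
    intro i j
    have heq : (fun v => (lam i * gg (t i) r v) * (lam j * gg (t j) r v))
        = fun v => (lam i * lam j) * (gg (t i) r v * gg (t j) r v) := by funext v; ring
    rw [heq]
    exact ((gg_mul_integrable (t i) (t j) r).const_mul _)
  have h1 : ∀ i j : Fin n, lam i * lam j * inn (t i) (t j) r
      = ∫ v in Set.Ioi (0:ℝ), (lam i * gg (t i) r v) * (lam j * gg (t j) r v) := by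
    intro i j
    unfold inn
    rw [← integral_const_mul]
    congr 1
    funext v
    ring
  have h2 : ∫ v in Set.Ioi (0:ℝ), (∑ i, lam i * gg (t i) r v) ^ 2
      = ∑ i, ∑ j, ∫ v in Set.Ioi (0:ℝ), (lam i * gg (t i) r v) * (lam j * gg (t j) r v) := by
    have hpt : (fun v => (∑ i, lam i * gg (t i) r v) ^ 2)
        = fun v => ∑ i, ∑ j, (lam i * gg (t i) r v) * (lam j * gg (t j) r v) := by
      funext v
      rw [sq, Finset.sum_mul_sum]
    rw [hpt, integral_finset_sum _ (fun i _ => integrable_finset_sum _ fun j _ => hGint i j)]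
    exact Finset.sum_congr rfl fun i _ => integral_finset_sum _ fun j _ => hGint i j
  have h3 : ∑ i, ∑ j, lam i * lam j * inn (t i) (t j) r
      = ∫ v in Set.Ioi (0:ℝ), (∑ i, lam i * gg (t i) r v) ^ 2 := by
    rw [h2]
    exact Finset.sum_congr rfl fun i _ => Finset.sum_congr rfl fun j _ => h1 i j
  rw [h3]
  exact setIntegral_nonneg measurableSet_Ioi fun v _ => sq_nonneg _
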